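/- Let G be a finite connected simple graph with exactly d+1 vertices, where d ≥ 1, and let λ be a probability edge weighting of G. Then there exists a vertex v of G such that the set of edges incident to v has total λ-weight at most 2/(d+1). In particular, G has an edge cut of weight at most 2/(d+1). -/

import Mathlib

attribute [local instance] Classical.propDecidable

/-- Proposition 4.3 of the paper: if `G` is a finite connected simple graph on `d + 1`
vertices (`d ≥ 1`) with a probability edge weighting `λ`, then some vertex `v` is such
that the edges incident to `v` have total weight at most `2/(d+1)`; in particular `G`
has an edge cut of weight at most `2/(d+1)`. -/
theorem graphic_cogirth_bound {V : Type} [Fintype V] (G : SimpleGraph V)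
    (hconn : G.Connected) (d : ℕ) (hd : 1 ≤ d) (hcard : Fintype.card V = d + 1)
    (lam : Sym2 V → ℝ) (hnn : ∀ e ∈ G.edgeFinset, 0 ≤ lam e)
    (hsum : ∑ e ∈ G.edgeFinset, lam e = 1) :
    (∃ v : V, ∑ e ∈ G.incidenceFinset v, lam e ≤ 2 / ((d : ℝ) + 1)) ∧
      ∃ A : Finset (Sym2 V), A ⊆ G.edgeFinset ∧
        ¬ (G.deleteEdges (A : Set (Sym2 V))).Connected ∧
        ∑ e ∈ A, lam e ≤ 2 / ((d : ℝ) + 1) := by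
  classical
  have hinc : ∀ v : V, G.incidenceFinset v = G.edgeFinset.filter (fun e => v ∈ e) := by
    intro v
    ext e
    simp [SimpleGraph.mem_incidenceFinset, SimpleGraph.incidenceSet,
      SimpleGraph.mem_edgeFinset, and_comm]
  have key : ∑ v : V, ∑ e ∈ G.incidenceFinset v, lam e = 2 := by
    have : ∑ v : V, ∑ e ∈ G.incidenceFinset v, lam e
        = ∑ e ∈ G.edgeFinset, ((Finset.univ.filter (fun v => v ∈ e)).card : ℝ) * lam e := by
      simp only [hinc, Finset.sum_filter]
      rw [Finset.sum_comm]
      refine Finset.sum_congr rfl fun e _ => ?_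
      rw [← Finset.sum_filter, Finset.sum_const, nsmul_eq_mul]
    rw [this]
    have hcard2 : ∀ e ∈ G.edgeFinset, (Finset.univ.filter (fun v => v ∈ e)).card = 2 := by
      intro e he
      induction e using Sym2.ind with
      | _ a b =>
        have hab : G.Adj a b := (SimpleGraph.mem_edgeFinset.mp he)
        have hne : a ≠ b := hab.ne
        have : Finset.univ.filter (fun v => v ∈ s(a, b)) = {a, b} := by
          ext v; simp [Sym2.mem_iff]
        rw [this, Finset.card_insert_of_notMem (by simp [hne]), Finset.card_singleton]
    calc ∑ e ∈ G.edgeFinset, ((Finset.univ.filter (fun v => v ∈ e)).card : ℝ) * lam e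
        = ∑ e ∈ G.edgeFinset, 2 * lam e := by
          refine Finset.sum_congr rfl fun e he => ?_
          rw [hcard2 e he]; norm_num
      _ = 2 := by rw [← Finset.mul_sum, hsum, mul_one]
  have hpos : (0 : ℝ) < (d : ℝ) + 1 := by positivity
  have hne : (Finset.univ : Finset V).Nonempty := by
    rw [← Finset.card_pos, Finset.card_univ, hcard]; omega
  obtain ⟨v, -, hv⟩ := Finset.exists_le_of_sum_le hne (f := fun v => ∑ e ∈ G.incidenceFinset v, lam e)
    (g := fun _ => 2 / ((d : ℝ) + 1)) (by
      rw [key, Finset.sum_const, Finset.card_univ, hcard, nsmul_eq_mul]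
      push_cast
      field_simp; exact le_rfl)
  refine ⟨⟨v, hv⟩, G.incidenceFinset v, ?_, ?_, hv⟩
  · rw [hinc]; exact Finset.filter_subset _ _
  · intro hconn'
    -- v is isolated in the deleted graph, but there is another vertex
    have : 2 ≤ Fintype.card V := by omega
    obtain ⟨u, hu⟩ := Fintype.exists_ne_of_one_lt_card (by omega) v
    obtain ⟨p⟩ := hconn'.preconnected u v
    cases p.reverse with
    | nil => exact hu rfl
    | @cons _ w _ h q =>
      have hadj : (G.deleteEdges ((G.incidenceFinset v : Set (Sym2 V)))).Adj v w := h
      rw [SimpleGraph.deleteEdges_adj] at hadj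
      exact hadj.2 (by
        simp only [Finset.coe_sort_coe, Finset.mem_coe, SimpleGraph.mem_incidenceFinset]
        exact ⟨hadj.1.symm.symm, Sym2.mem_mk_left v w⟩)
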